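/- Define σ : ℂ⁵ → ℂ⁵ by σ(x) = ((1/64)f0 − (1/4)f1 + (3/2)f2 + 16f3 + 64f4, −(1/8)f0 + (3/2)f1 + 2f2 + 32f3, f0 − 8f1 + 16f2, −8f0 + 32f1, 64f0), and p : ℂ⁴ → ℂ⁵ by p(x1,x2,x3,x4) = (4x1x3 + x1x4 − 3x2² − x2x3, x1x4, x2x4, x3x4, x4²) (the homogenized parametrization of the quadric). Then the image of p lies on Q = {f1 + f5 = 0}, and σ(σ(p(x))) is a polynomial scalar multiple of p(x) for all x ∈ ℂ⁴. Hence σ induces a birational involution of the smooth quadric Q = {f1 + f5 = 0} ⊂ P⁴. -/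
import Mathlib


/-- σ : ℂ⁵ → ℂ⁵ from Case (3) of Theorem 3.1. -/
noncomputable def sigmaMap (x : Fin 5 → ℂ) : Fin 5 → ℂ :=
  let f0 := (x 3)^2 - (x 2)*(x 4)
  let f1 := (x 2)*(x 3) - (x 1)*(x 4)
  let f2 := (x 2)^2 - (x 0)*(x 4)
  let f3 := (x 1)*(x 2) - (x 0)*(x 3)
  let f4 := (x 1)^2 - (x 0)*(x 2)
  ![ (1/64)*f0 - (1/4)*f1 + (3/2)*f2 + 16*f3 + 64*f4,
     -(1/8)*f0 + (3/2)*f1 + 2*f2 + 32*f3,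
     f0 - 8*f1 + 16*f2,
     -8*f0 + 32*f1,
     64*f0 ]

/-- The homogenized parametrization of the quadric Q = {f1 + f5 = 0}. -/
def pMap3 (x1 x2 x3 x4 : ℂ) : Fin 5 → ℂ :=
  ![ 4*x1*x3 + x1*x4 - 3*x2^2 - x2*x3, x1*x4, x2*x4, x3*x4, x4^2 ]

lemma sigmaMap_def (x : Fin 5 → ℂ) : sigmaMap x =
    ![ (1/64)*((x 3)^2 - (x 2)*(x 4)) - (1/4)*((x 2)*(x 3) - (x 1)*(x 4))
         + (3/2)*((x 2)^2 - (x 0)*(x 4)) + 16*((x 1)*(x 2) - (x 0)*(x 3))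
         + 64*((x 1)^2 - (x 0)*(x 2)),
       -(1/8)*((x 3)^2 - (x 2)*(x 4)) + (3/2)*((x 2)*(x 3) - (x 1)*(x 4))
         + 2*((x 2)^2 - (x 0)*(x 4)) + 32*((x 1)*(x 2) - (x 0)*(x 3)),
       ((x 3)^2 - (x 2)*(x 4)) - 8*((x 2)*(x 3) - (x 1)*(x 4)) + 16*((x 2)^2 - (x 0)*(x 4)),
       -8*((x 3)^2 - (x 2)*(x 4)) + 32*((x 2)*(x 3) - (x 1)*(x 4)),
       64*((x 3)^2 - (x 2)*(x 4)) ] := rfl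

set_option maxHeartbeats 1600000 in
theorem sigma_involution (x1 x2 x3 x4 : ℂ) :
    ((pMap3 x1 x2 x3 x4 2)*(pMap3 x1 x2 x3 x4 3) - (pMap3 x1 x2 x3 x4 1)*(pMap3 x1 x2 x3 x4 4)
      + 3*(pMap3 x1 x2 x3 x4 2)^2 - 4*(pMap3 x1 x2 x3 x4 1)*(pMap3 x1 x2 x3 x4 3)
      + (pMap3 x1 x2 x3 x4 0)*(pMap3 x1 x2 x3 x4 4) = 0) ∧
    (∃ c : ℂ, sigmaMap (sigmaMap (pMap3 x1 x2 x3 x4)) = c • pMap3 x1 x2 x3 x4) := by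
  constructor
  · simp only [pMap3, Matrix.cons_val_zero, Matrix.cons_val_one, Matrix.head_cons,
      Matrix.cons_val_two, Matrix.tail_cons, Matrix.cons_val_three, Matrix.cons_val_four]
    ring
  · refine ⟨65536 * (-(x2*x3^3*x4^2) + x1*x3^2*x4^3 + x2^2*x3*x4^3 - x1*x2*x4^4
      - 3*x2^2*x3^2*x4^2 - 6*x1*x2*x3*x4^3 + x1^2*x4^4 + 4*x2^3*x4^3 + 4*x1*x3^3*x4^2), ?_⟩
    funext i
    fin_cases i <;>
      · simp [sigmaMap_def, pMap3]
        ring
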